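/- Let μ > 0, a ∈ ℝ, C₀ > 0, and let Z₀ : (0, ∞) → (0, ∞) be twice differentiable with v·|Z₀′(v)| ≤ C₀·Z₀(v) and v²·|Z₀″(v)| ≤ C₀·Z₀(v) for all v > 0. Define Z(u, t) = ((u + μt)/u)^a · Z₀(u + μt) for u, t > 0. Then there is a constant C > 0, depending only on a and C₀, such that for all u, t > 0, u·|∂ᵤZ(u,t)| + u²·|∂ᵤ²Z(u,t)| ≤ C·Z(u,t). -/

import Mathlib

set_option maxHeartbeats 1000000


/-- The approximate solution `Z(u,t) = ((u + μt)/u)^a · Z₀(u + μt)` inherits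
the scaled derivative bounds of its initial data:
`u·|∂ᵤZ| + u²·|∂ᵤ²Z| ≤ C·Z` with `C` depending only on `a` and `C₀`. -/
theorem approximate_solution_regularity (a C₀ : ℝ) (hC₀ : 0 < C₀) :
    ∃ C : ℝ, 0 < C ∧
      ∀ μ : ℝ, 0 < μ → ∀ Z₀ Z₀' Z₀'' : ℝ → ℝ,
        (∀ v : ℝ, 0 < v → 0 < Z₀ v) →
        (∀ v : ℝ, 0 < v → HasDerivAt Z₀ (Z₀' v) v) →
        (∀ v : ℝ, 0 < v → HasDerivAt Z₀' (Z₀'' v) v) →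
        (∀ v : ℝ, 0 < v → v * |Z₀' v| ≤ C₀ * Z₀ v) →
        (∀ v : ℝ, 0 < v → v ^ 2 * |Z₀'' v| ≤ C₀ * Z₀ v) →
        ∀ u t : ℝ, 0 < u → 0 < t →
          u * |deriv (fun x => ((x + μ * t) / x) ^ a * Z₀ (x + μ * t)) u| +
              u ^ 2 *
                |deriv (deriv (fun x => ((x + μ * t) / x) ^ a * Z₀ (x + μ * t))) u| ≤
            C * (((u + μ * t) / u) ^ a * Z₀ (u + μ * t)) := by
  refine ⟨|a| * |a - 1| + 3 * |a| + 2 * |a| * C₀ + 2 * C₀, by positivity, ?_⟩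
  intro μ hμ Z₀ Z₀' Z₀'' hpos hd1 hd2 hb1 hb2 u t hu ht
  set m := μ * t with hmdef
  have hm : 0 < m := mul_pos hμ ht
  have hqpos : ∀ x : ℝ, 0 < x → 0 < (x + m) / x := fun x hx => div_pos (by linarith) hx
  -- derivative of the quotient (x+m)/x
  have hQ : ∀ x : ℝ, 0 < x → HasDerivAt (fun y : ℝ => (y + m) / y) (-m / x ^ 2) x := by
    intro x hx
    have h1 : HasDerivAt (fun y : ℝ => y + m) 1 x := (hasDerivAt_id x).add_const m
    have h2 := h1.div (hasDerivAt_id x) hx.ne'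
    refine h2.congr_deriv ?_
    simp only [id]
    ring
  -- derivative of ((x+m)/x)^b
  have hGb : ∀ b : ℝ, ∀ x : ℝ, 0 < x →
      HasDerivAt (fun y : ℝ => ((y + m) / y) ^ b)
        (b * ((x + m) / x) ^ (b - 1) * (-m / x ^ 2)) x := by
    intro b x hx
    have := (hQ x hx).rpow_const (p := b) (Or.inl (hqpos x hx).ne')
    convert this using 1
    ring
  -- derivatives of the shifted data
  have hZc : ∀ x : ℝ, 0 < x → HasDerivAt (fun y : ℝ => Z₀ (y + m)) (Z₀' (x + m)) x := by
    intro x hx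
    have h1 : HasDerivAt (fun y : ℝ => y + m) 1 x := (hasDerivAt_id x).add_const m
    have := (hd1 (x + m) (by linarith)).comp x h1
    simpa [Function.comp_def] using this
  have hZc' : ∀ x : ℝ, 0 < x → HasDerivAt (fun y : ℝ => Z₀' (y + m)) (Z₀'' (x + m)) x := by
    intro x hx
    have h1 : HasDerivAt (fun y : ℝ => y + m) 1 x := (hasDerivAt_id x).add_const m
    have := (hd2 (x + m) (by linarith)).comp x h1
    simpa [Function.comp_def] using this
  -- first derivative of f
  have hF : ∀ x : ℝ, 0 < x →
      HasDerivAt (fun y : ℝ => ((y + m) / y) ^ a * Z₀ (y + m))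
        (a * ((x + m) / x) ^ (a - 1) * (-m / x ^ 2) * Z₀ (x + m)
          + ((x + m) / x) ^ a * Z₀' (x + m)) x :=
    fun x hx => (hGb a x hx).mul (hZc x hx)
  have hE1 : deriv (fun x => ((x + m) / x) ^ a * Z₀ (x + m)) u
      = a * ((u + m) / u) ^ (a - 1) * (-m / u ^ 2) * Z₀ (u + m)
          + ((u + m) / u) ^ a * Z₀' (u + m) := (hF u hu).deriv
  -- the first derivative agrees with an explicit function near u
  have hev : deriv (fun x => ((x + m) / x) ^ a * Z₀ (x + m)) =ᶠ[nhds u]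
      (fun x => a * ((x + m) / x) ^ (a - 1) * (-m / x ^ 2) * Z₀ (x + m)
          + ((x + m) / x) ^ a * Z₀' (x + m)) := by
    filter_upwards [eventually_gt_nhds hu] with x hx
    exact (hF x hx).deriv
  -- derivative of -m/x^2
  have hB : HasDerivAt (fun x : ℝ => -m / x ^ 2) (2 * m / u ^ 3) u := by
    have hp : HasDerivAt (fun y : ℝ => y ^ 2) (2 * u) u := by
      simpa using hasDerivAt_pow 2 u
    have := (hasDerivAt_const u (-m)).div hp (pow_ne_zero 2 hu.ne')
    refine this.congr_deriv ?_
    rw [div_eq_div_iff (by positivity) (by positivity)]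
    ring
  -- second derivative
  have h1 : HasDerivAt (fun x : ℝ => a * ((x + m) / x) ^ (a - 1))
      (a * ((a - 1) * ((u + m) / u) ^ (a - 1 - 1) * (-m / u ^ 2))) u :=
    (hGb (a - 1) u hu).const_mul a
  have h2 := h1.mul hB
  have h3 := h2.mul (hZc u hu)
  have h4 := (hGb a u hu).mul (hZc' u hu)
  have hF1 := h3.add h4
  have hE2 : deriv (deriv (fun x => ((x + m) / x) ^ a * Z₀ (x + m))) u
      = (a * ((a - 1) * ((u + m) / u) ^ (a - 1 - 1) * (-m / u ^ 2)) * (-m / u ^ 2)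
          + a * ((u + m) / u) ^ (a - 1) * (2 * m / u ^ 3)) * Z₀ (u + m)
        + a * ((u + m) / u) ^ (a - 1) * (-m / u ^ 2) * Z₀' (u + m)
        + (a * ((u + m) / u) ^ (a - 1) * (-m / u ^ 2) * Z₀' (u + m)
          + ((u + m) / u) ^ a * Z₀'' (u + m)) := by
    rw [hev.deriv_eq]
    exact hF1.deriv
  -- rewrite the rpow factors
  have hq : (0:ℝ) < (u + m) / u := hqpos u hu
  have hum : (0:ℝ) < u + m := by linarith
  have e1 : ((u + m) / u) ^ (a - 1) = ((u + m) / u) ^ a * (u / (u + m)) := by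
    rw [show a - 1 = a + (-1) by ring, Real.rpow_add hq, Real.rpow_neg_one, inv_div]
  have e2 : ((u + m) / u) ^ (a - 1 - 1)
      = ((u + m) / u) ^ a * (u / (u + m)) * (u / (u + m)) := by
    rw [show a - 1 - 1 = (a - 1) + (-1) by ring, Real.rpow_add hq, Real.rpow_neg_one,
      inv_div, e1]
  -- canonical forms
  have hE1c : deriv (fun x => ((x + m) / x) ^ a * Z₀ (x + m)) u
      = (-(a * (m / (u * (u + m))))) * (((u + m) / u) ^ a * Z₀ (u + m))
        + ((u + m) / u) ^ a * Z₀' (u + m) := by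
    rw [hE1, e1]
    field_simp
  have hE2c : deriv (deriv (fun x => ((x + m) / x) ^ a * Z₀ (x + m))) u
      = (a * (a - 1) * ((m / (u * (u + m))) * (m / (u * (u + m)))))
            * (((u + m) / u) ^ a * Z₀ (u + m))
        + (2 * a * (m / (u ^ 2 * (u + m)))) * (((u + m) / u) ^ a * Z₀ (u + m))
        + (-(2 * a * (m / (u * (u + m))))) * (((u + m) / u) ^ a * Z₀' (u + m))
        + ((u + m) / u) ^ a * Z₀'' (u + m) := by
    rw [hE2, e1, e2]
    field_simp
    ring
  -- abbreviations
  set P := ((u + m) / u) ^ a with hPdef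
  set Zw := Z₀ (u + m) with hZwdef
  set Z1 := Z₀' (u + m) with hZ1def
  set Z2 := Z₀'' (u + m) with hZ2def
  set r := m / (u * (u + m)) with hrdef
  set s := m / (u ^ 2 * (u + m)) with hsdef
  have hP : 0 < P := Real.rpow_pos_of_pos hq a
  have hZw : 0 < Zw := hpos _ hum
  have hr0 : 0 ≤ r := by rw [hrdef]; positivity
  have hs0 : 0 ≤ s := by rw [hsdef]; positivity
  have hur : u * r ≤ 1 := by
    rw [hrdef]
    rw [show u * (m / (u * (u + m))) = m / (u + m) by field_simp]
    rw [div_le_one hum]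
    linarith
  have hu2s : u ^ 2 * s ≤ 1 := by
    rw [hsdef]
    rw [show u ^ 2 * (m / (u ^ 2 * (u + m))) = m / (u + m) by field_simp]
    rw [div_le_one hum]
    linarith
  have h3b : u * |Z1| ≤ C₀ * Zw := by
    calc u * |Z1| ≤ (u + m) * |Z1| :=
          mul_le_mul_of_nonneg_right (by linarith) (abs_nonneg _)
      _ ≤ C₀ * Zw := hb1 (u + m) hum
  have h4b : u ^ 2 * |Z2| ≤ C₀ * Zw := by
    calc u ^ 2 * |Z2| ≤ (u + m) ^ 2 * |Z2| :=
          mul_le_mul_of_nonneg_right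
            (pow_le_pow_left₀ hu.le (by linarith : u ≤ u + m) 2) (abs_nonneg _)
      _ ≤ C₀ * Zw := hb2 (u + m) hum
  rw [hE1c, hE2c]
  -- bound the first derivative
  have habs1 : |(-(a * r)) * (P * Zw) + P * Z1| ≤ |a| * r * (P * Zw) + P * |Z1| := by
    refine (abs_add_le _ _).trans (le_of_eq ?_)
    rw [abs_mul, abs_neg, abs_mul, abs_of_nonneg hr0, abs_of_pos (mul_pos hP hZw),
      abs_mul, abs_of_pos hP]
  -- bound the second derivative
  have habs2 : |(a * (a - 1) * (r * r)) * (P * Zw) + (2 * a * s) * (P * Zw)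
        + (-(2 * a * r)) * (P * Z1) + P * Z2|
      ≤ |a| * |a - 1| * (r * r) * (P * Zw) + 2 * |a| * s * (P * Zw)
        + 2 * |a| * r * (P * |Z1|) + P * |Z2| := by
    have k1 : |(a * (a - 1) * (r * r)) * (P * Zw)|
        = |a| * |a - 1| * (r * r) * (P * Zw) := by
      rw [abs_mul, abs_mul, abs_mul, abs_of_nonneg (by positivity : (0:ℝ) ≤ r * r),
        abs_of_pos (mul_pos hP hZw)]
    have k2 : |(2 * a * s) * (P * Zw)| = 2 * |a| * s * (P * Zw) := by
      rw [abs_mul, abs_mul, abs_mul, abs_of_nonneg hs0, abs_of_pos (mul_pos hP hZw)]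
      norm_num
    have k3 : |(-(2 * a * r)) * (P * Z1)| = 2 * |a| * r * (P * |Z1|) := by
      rw [abs_mul, abs_neg, abs_mul, abs_mul, abs_of_nonneg hr0, abs_mul,
        abs_of_pos hP]
      norm_num
    have k4 : |P * Z2| = P * |Z2| := by rw [abs_mul, abs_of_pos hP]
    calc |(a * (a - 1) * (r * r)) * (P * Zw) + (2 * a * s) * (P * Zw)
          + (-(2 * a * r)) * (P * Z1) + P * Z2|
        ≤ |(a * (a - 1) * (r * r)) * (P * Zw) + (2 * a * s) * (P * Zw)
          + (-(2 * a * r)) * (P * Z1)| + |P * Z2| := abs_add_le _ _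
      _ ≤ |(a * (a - 1) * (r * r)) * (P * Zw) + (2 * a * s) * (P * Zw)|
          + |(-(2 * a * r)) * (P * Z1)| + |P * Z2| := by
            have := abs_add_le ((a * (a - 1) * (r * r)) * (P * Zw) + (2 * a * s) * (P * Zw))
              ((-(2 * a * r)) * (P * Z1))
            linarith
      _ ≤ |(a * (a - 1) * (r * r)) * (P * Zw)| + |(2 * a * s) * (P * Zw)|
          + |(-(2 * a * r)) * (P * Z1)| + |P * Z2| := by
            have := abs_add_le ((a * (a - 1) * (r * r)) * (P * Zw)) ((2 * a * s) * (P * Zw))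
            linarith
      _ = _ := by rw [k1, k2, k3, k4]
  have hL1 : u * |(-(a * r)) * (P * Zw) + P * Z1|
      ≤ u * (|a| * r * (P * Zw) + P * |Z1|) :=
    mul_le_mul_of_nonneg_left habs1 hu.le
  have hL2 : u ^ 2 * |(a * (a - 1) * (r * r)) * (P * Zw) + (2 * a * s) * (P * Zw)
        + (-(2 * a * r)) * (P * Z1) + P * Z2|
      ≤ u ^ 2 * (|a| * |a - 1| * (r * r) * (P * Zw) + 2 * |a| * s * (P * Zw)
        + 2 * |a| * r * (P * |Z1|) + P * |Z2|) :=
    mul_le_mul_of_nonneg_left habs2 (by positivity)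
  -- term-by-term bounds
  have t1 : u * (|a| * r * (P * Zw)) ≤ |a| * (P * Zw) := by
    linarith [mul_le_mul_of_nonneg_left hur
      (mul_nonneg (abs_nonneg a) (mul_pos hP hZw).le)]
  have t2 : u * (P * |Z1|) ≤ C₀ * (P * Zw) := by
    linarith [mul_le_mul_of_nonneg_left h3b hP.le]
  have hur2 : (u * r) * (u * r) ≤ 1 :=
    mul_le_one₀ hur (mul_nonneg hu.le hr0) hur
  have t3 : u ^ 2 * (|a| * |a - 1| * (r * r) * (P * Zw)) ≤ |a| * |a - 1| * (P * Zw) := by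
    linarith [mul_le_mul_of_nonneg_left hur2
      (by positivity : (0:ℝ) ≤ |a| * |a - 1| * (P * Zw))]
  have t4 : u ^ 2 * (2 * |a| * s * (P * Zw)) ≤ 2 * |a| * (P * Zw) := by
    linarith [mul_le_mul_of_nonneg_left hu2s
      (by positivity : (0:ℝ) ≤ 2 * |a| * (P * Zw))]
  have h5 : (u * r) * (u * |Z1|) ≤ C₀ * Zw :=
    (mul_le_mul hur h3b (mul_nonneg hu.le (abs_nonneg _)) zero_le_one).trans_eq
      (one_mul _)
  have t5 : u ^ 2 * (2 * |a| * r * (P * |Z1|)) ≤ 2 * |a| * C₀ * (P * Zw) := by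
    linarith [mul_le_mul_of_nonneg_left h5
      (by positivity : (0:ℝ) ≤ 2 * |a| * P)]
  have t6 : u ^ 2 * (P * |Z2|) ≤ C₀ * (P * Zw) := by
    linarith [mul_le_mul_of_nonneg_left h4b hP.le]
  linarith [hL1, hL2, t1, t2, t3, t4, t5, t6]
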